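/- Let α > 0 and σ > 0 be real numbers. Every complex root λ of the polynomial (1 − λ)² + α²σ²λ² satisfies |λ| = 1/√(1 + α²σ²) < 1. Consequently the proximal point algorithm on a bilinear game always converges linearly. -/

import Mathlib

/-- Proximal point algorithm on a bilinear game: every complex root `λ` of
`(1 − λ)² + α²σ²λ²` has modulus `1/√(1 + α²σ²) < 1`; hence the proximal point
algorithm always converges linearly. -/
theorem proximal_point_converges (α σ : ℝ) (hα : 0 < α) (hσ : 0 < σ) :
    (∀ z : ℂ, (1 - z) ^ 2 + (α : ℂ) ^ 2 * (σ : ℂ) ^ 2 * z ^ 2 = 0 →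
        ‖z‖ = 1 / Real.sqrt (1 + α ^ 2 * σ ^ 2)) ∧
      1 / Real.sqrt (1 + α ^ 2 * σ ^ 2) < 1 := by
  set c : ℝ := α * σ with hc
  have hcpos : 0 < c := mul_pos hα hσ
  have hsum : (1 : ℝ) + α ^ 2 * σ ^ 2 = 1 + c ^ 2 := by ring
  have habs : ∀ s : ℝ, ‖1 - (s : ℂ) * Complex.I‖ = Real.sqrt (1 + s ^ 2) := by
    intro s
    rw [Complex.norm_def, Complex.normSq_apply]
    simp [Complex.sub_re, Complex.sub_im]
    ring_nf
  constructor
  · intro z hz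
    have hfac : (1 - z + (c : ℂ) * Complex.I * z) * (1 - z - (c : ℂ) * Complex.I * z) = 0 := by
      have : (1 - z + (c : ℂ) * Complex.I * z) * (1 - z - (c : ℂ) * Complex.I * z)
          = (1 - z) ^ 2 + (α : ℂ) ^ 2 * (σ : ℂ) ^ 2 * z ^ 2 := by
        have hI : (Complex.I : ℂ) ^ 2 = -1 := Complex.I_sq
        push_cast [hc]
        ring_nf
        rw [hI]
        ring
      rw [this, hz]
    have key : ‖z‖ * Real.sqrt (1 + c ^ 2) = 1 := by
      rcases mul_eq_zero.mp hfac with h | h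
      · have hz1 : z * (1 - (c : ℂ) * Complex.I) = 1 := by linear_combination -h
        have := congrArg norm hz1
        rw [norm_mul, habs c, norm_one] at this
        exact this
      · have hz1 : z * (1 - (-c : ℝ) * Complex.I) = 1 := by push_cast; linear_combination -h
        have := congrArg norm hz1
        rw [norm_mul, habs (-c), norm_one] at this
        simpa [neg_sq] using this
    have hsq : (0:ℝ) < Real.sqrt (1 + c ^ 2) :=
      Real.sqrt_pos.mpr (by positivity)
    rw [hsum]
    field_simp
    linarith [key]
  · rw [hsum]
    rw [div_lt_one (Real.sqrt_pos.mpr (by positivity))]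
    have : (1:ℝ) = Real.sqrt 1 := by simp
    nth_rewrite 1 [this]
    exact Real.sqrt_lt_sqrt (by norm_num) (by nlinarith)
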